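/- The complex Hermitian space ℂ^16 does not admit any family of ten ℂ-linear endomorphisms P_0, …, P_9 that are self-adjoint with respect to the standard Hermitian inner product and satisfy P_α ∘ P_α = Id for every α and P_α ∘ P_β = −P_β ∘ P_α whenever α ≠ β. -/

import Mathlib

open scoped ComplexInnerProductSpace

section Aux

variable {A : Type*} [Ring A]

/-- If `r` squares to one and anticommutes with `x`, then (after taking trace) `x` is
conjugate to `-x`.  Stated abstractly: `r * (x * r) = -x`. -/
private lemma aux_conj_neg {r x : A} (hr : r * r = 1) (h : r * x = -(x * r)) :
    r * (x * r) = -x := by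
  have : r * (x * r) = (r * x) * r := by rw [mul_assoc]
  rw [this, h]
  calc -(x * r) * r = -(x * (r * r)) := by noncomm_ring
    _ = -x := by rw [hr, mul_one]

end Aux

open Fin.NatCast

theorem no_hermitian_cliffordSystem_ten_elements_on_C16 :
    ¬ ∃ P : Fin 10 → (EuclideanSpace ℂ (Fin 16) →ₗ[ℂ] EuclideanSpace ℂ (Fin 16)),
      (∀ α, ∀ x y : EuclideanSpace ℂ (Fin 16), ⟪P α x, y⟫ = ⟪x, P α y⟫) ∧
      (∀ α, P α ∘ₗ P α = LinearMap.id) ∧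
      (∀ α β, α ≠ β → P α ∘ₗ P β = -(P β ∘ₗ P α)) := by
  rintro ⟨P, -, hsq', hac'⟩
  set A := Module.End ℂ (EuclideanSpace ℂ (Fin 16)) with hA
  have hsq : ∀ α : Fin 10, P α * P α = 1 := hsq'
  have hac : ∀ α β : Fin 10, α ≠ β → P α * P β = -(P β * P α) := hac'
  -- a vector anticommutes past a product of two other vectors
  have swap2 : ∀ r a b : Fin 10, r ≠ a → r ≠ b →
      P r * (P a * P b) = (P a * P b) * P r := by
    intro r a b h1 h2
    calc P r * (P a * P b) = (P r * P a) * P b := by rw [mul_assoc]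
      _ = (-(P a * P r)) * P b := by rw [hac r a h1]
      _ = -(P a * (P r * P b)) := by noncomm_ring
      _ = -(P a * (-(P b * P r))) := by rw [hac r b h2]
      _ = (P a * P b) * P r := by noncomm_ring
  -- the "complex structure pairs"
  set E : Fin 10 → Fin 10 → A := fun a b => Complex.I • (P a * P b) with hE
  -- each E a b squares to 1
  have hEsq : ∀ a b : Fin 10, a ≠ b → E a b * E a b = 1 := by
    intro a b h
    have key : (P a * P b) * (P a * P b) = -1 := by
      calc (P a * P b) * (P a * P b) = P a * ((P b * P a) * P b) := by noncomm_ring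
        _ = P a * ((-(P a * P b)) * P b) := by rw [hac b a h.symm]
        _ = -((P a * P a) * (P b * P b)) := by noncomm_ring
        _ = -1 := by rw [hsq, hsq, mul_one]
    calc E a b * E a b = (Complex.I * Complex.I) • ((P a * P b) * (P a * P b)) := by
          rw [hE]; rw [smul_mul_smul_comm]
      _ = ((-1 : ℂ)) • ((-1 : A)) := by rw [Complex.I_mul_I, key]
      _ = 1 := by rw [neg_smul, one_smul, neg_neg]
  -- P r commutes with E a b when r differs from a, b
  have hPcomm : ∀ r a b : Fin 10, r ≠ a → r ≠ b → Commute (P r) (E a b) := by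
    intro r a b h1 h2
    show P r * E a b = E a b * P r
    rw [hE]
    simp only [mul_smul_comm, smul_mul_assoc]
    rw [swap2 r a b h1 h2]
  -- P a anticommutes with E a b
  have hPanti : ∀ a b : Fin 10, a ≠ b → P a * E a b = -(E a b * P a) := by
    intro a b h
    have h1 : P a * (P a * P b) = P b := by rw [← mul_assoc, hsq, one_mul]
    have h2 : (P a * P b) * P a = -P b := by
      calc (P a * P b) * P a = P a * (P b * P a) := by rw [mul_assoc]
        _ = P a * (-(P a * P b)) := by rw [hac b a h.symm]
        _ = -((P a * P a) * P b) := by noncomm_ring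
        _ = -P b := by rw [hsq, one_mul]
    rw [hE]
    simp only [mul_smul_comm, smul_mul_assoc]
    rw [h1, h2, smul_neg, neg_neg]
  -- E a b commutes with E c d for disjoint pairs
  have hEcomm : ∀ a b c d : Fin 10, c ≠ a → c ≠ b → d ≠ a → d ≠ b →
      Commute (E a b) (E c d) := by
    intro a b c d h1 h2 h3 h4
    show E a b * E c d = E c d * E a b
    rw [hE]
    rw [smul_mul_smul_comm, smul_mul_smul_comm]
    congr 1
    calc (P a * P b) * (P c * P d) = ((P a * P b) * P c) * P d := by
          noncomm_ring
      _ = (P c * (P a * P b)) * P d := by rw [← swap2 c a b h1 h2]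
      _ = P c * ((P a * P b) * P d) := by rw [mul_assoc]
      _ = P c * (P d * (P a * P b)) := by rw [swap2 d a b h3 h4]
      _ = (P c * P d) * (P a * P b) := by rw [← mul_assoc]
  -- the five commuting involutions
  set Q : Fin 5 → A := fun j => E (2 * j) (2 * j + 1) with hQ
  have hQsq : ∀ j, Q j * Q j = 1 := by
    intro j; apply hEsq; fin_cases j <;> decide
  have hQcomm : ∀ i j : Fin 5, i ≠ j → Commute (Q i) (Q j) := by
    intro i j h; apply hEcomm <;> (fin_cases i <;> fin_cases j <;> first | rfl | decide | (exfalso; exact h rfl))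
  -- P (2 j) anticommutes with Q j and commutes with Q k for k ≠ j
  have hRanti : ∀ j : Fin 5, P (2 * j) * Q j = -(Q j * P (2 * j)) := by
    intro j; apply hPanti; fin_cases j <;> decide
  have hRcomm : ∀ j k : Fin 5, j ≠ k → Commute (P (2 * j)) (Q k) := by
    intro j k h; apply hPcomm <;> (fin_cases j <;> fin_cases k <;> first | decide | (exfalso; exact h rfl))
  -- idempotents
  set e : Fin 5 → A := fun j => (2 : ℂ)⁻¹ • (1 + Q j) with he
  have hesq : ∀ j, IsIdempotentElem (e j) := by
    intro j
    have key : (1 + Q j) * (1 + Q j) = (2 : ℂ) • (1 + Q j) := by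
      have : (1 + Q j) * (1 + Q j) = 1 + Q j + Q j + Q j * Q j := by noncomm_ring
      rw [this, hQsq j, two_smul]; abel
    show e j * e j = e j
    rw [he]
    rw [smul_mul_smul_comm, key, smul_smul]
    norm_num
  have hecomm : ∀ i j : Fin 5, i ≠ j → Commute (e i) (e j) := by
    intro i j h
    rw [he]
    exact (((Commute.one_left _).add_left
      ((Commute.one_right _).add_right (hQcomm i j h))).smul_left _).smul_right _
  -- P (2 j) commutes with e k for k ≠ j
  have hRe : ∀ j k : Fin 5, j ≠ k → Commute (P (2 * j)) (e k) := by
    intro j k h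
    rw [he]
    exact ((Commute.one_right _).add_right (hRcomm j k h)).smul_right _
  -- the big idempotent
  set π : A := e 0 * (e 1 * (e 2 * (e 3 * e 4))) with hπ
  have hidem : IsIdempotentElem π := by
    have h4 : IsIdempotentElem (e 4) := hesq 4
    have h34 : IsIdempotentElem (e 3 * e 4) :=
      (hesq 3).mul_of_commute (hecomm 3 4 (by decide)) h4
    have h234 : IsIdempotentElem (e 2 * (e 3 * e 4)) :=
      (hesq 2).mul_of_commute
        ((hecomm 2 3 (by decide)).mul_right (hecomm 2 4 (by decide))) h34
    have h1234 : IsIdempotentElem (e 1 * (e 2 * (e 3 * e 4))) :=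
      (hesq 1).mul_of_commute
        ((hecomm 1 2 (by decide)).mul_right
          ((hecomm 1 3 (by decide)).mul_right (hecomm 1 4 (by decide)))) h234
    exact (hesq 0).mul_of_commute
      ((hecomm 0 1 (by decide)).mul_right
        ((hecomm 0 2 (by decide)).mul_right
          ((hecomm 0 3 (by decide)).mul_right (hecomm 0 4 (by decide))))) h1234
  -- trace is a ring trace
  set T : A →ₗ[ℂ] ℂ := LinearMap.trace ℂ (EuclideanSpace ℂ (Fin 16)) with hT
  have traceZero : ∀ x : A, ∀ r : A, r * r = 1 → r * x = -(x * r) → T x = 0 := by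
    intro x r hr h
    have h1 : T (r * (x * r)) = T x := by
      rw [hT, LinearMap.trace_mul_comm, mul_assoc, hr, mul_one]
    rw [aux_conj_neg hr h, map_neg] at h1
    have : (2 : ℂ) * T x = 0 := by linear_combination -h1
    have h2 : (2 : ℂ) ≠ 0 := by norm_num
    exact (mul_eq_zero.mp this).resolve_left h2
  -- the key reduction step: T (e j * M) = 2⁻¹ * T M when P (2j) commutes with M
  have step : ∀ (j : Fin 5) (M : A), Commute (P (2 * j)) M →
      T (e j * M) = (2 : ℂ)⁻¹ * T M := by
    intro j M hM
    have expand : e j * M = (2 : ℂ)⁻¹ • (M + Q j * M) := by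
      rw [he]
      rw [smul_mul_assoc, add_mul, one_mul]
    have hzero : T (Q j * M) = 0 := by
      apply traceZero _ (P (2 * j)) (hsq _)
      calc P (2 * j) * (Q j * M) = (P (2 * j) * Q j) * M := by rw [mul_assoc]
        _ = (-(Q j * P (2 * j))) * M := by rw [hRanti j]
        _ = -(Q j * (P (2 * j) * M)) := by rw [neg_mul, mul_assoc]
        _ = -(Q j * (M * P (2 * j))) := by rw [hM]
        _ = -((Q j * M) * P (2 * j)) := by rw [mul_assoc]
    rw [expand, map_smul, map_add, hzero, add_zero, smul_eq_mul]
  -- P (2 j) commutes with tails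
  have hc0 : Commute (P (2 * (0 : Fin 5))) (e 1 * (e 2 * (e 3 * e 4))) :=
    (hRe 0 1 (by decide)).mul_right
      ((hRe 0 2 (by decide)).mul_right
        ((hRe 0 3 (by decide)).mul_right (hRe 0 4 (by decide))))
  have hc1 : Commute (P (2 * (1 : Fin 5))) (e 2 * (e 3 * e 4)) :=
    (hRe 1 2 (by decide)).mul_right
      ((hRe 1 3 (by decide)).mul_right (hRe 1 4 (by decide)))
  have hc2 : Commute (P (2 * (2 : Fin 5))) (e 3 * e 4) :=
    (hRe 2 3 (by decide)).mul_right (hRe 2 4 (by decide))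
  have hc3 : Commute (P (2 * (3 : Fin 5))) (e 4) := hRe 3 4 (by decide)
  have hc4 : Commute (P (2 * (4 : Fin 5))) (1 : A) := Commute.one_right _
  -- compute the trace of π
  have hTone : T 1 = 16 := by
    rw [hT, LinearMap.trace_one]; simp
  have hTπ : T π = 1 / 2 := by
    have t4 : T (e 4) = (2 : ℂ)⁻¹ * T 1 := by
      have : e 4 = e 4 * 1 := by rw [mul_one]
      rw [this]; exact step 4 1 hc4
    have t3 : T (e 3 * e 4) = (2 : ℂ)⁻¹ * T (e 4) := step 3 _ hc3
    have t2 : T (e 2 * (e 3 * e 4)) = (2 : ℂ)⁻¹ * T (e 3 * e 4) := step 2 _ hc2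
    have t1 : T (e 1 * (e 2 * (e 3 * e 4))) = (2 : ℂ)⁻¹ * T (e 2 * (e 3 * e 4)) :=
      step 1 _ hc1
    have t0 : T π = (2 : ℂ)⁻¹ * T (e 1 * (e 2 * (e 3 * e 4))) := step 0 _ hc0
    rw [t0, t1, t2, t3, t4, hTone]
    norm_num
  -- but π is a projection, so its trace is a natural number
  obtain ⟨S, hS⟩ := (LinearMap.isProj_iff_isIdempotentElem π).mpr hidem
  have hfr : T π = (Module.finrank ℂ S : ℂ) := hS.trace
  rw [hTπ] at hfr
  have : ((2 * Module.finrank ℂ S : ℕ) : ℂ) = 1 := by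
    push_cast
    rw [← hfr]
    ring
  have h2 : (2 * Module.finrank ℂ S : ℕ) = 1 := by exact_mod_cast this
  omega
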